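/- Let k be a field and let A, B ∈ SL_2(k). Then the commutator satisfies the matrix identity [A,B] = −t_{AB}·t_B·A + t_{AB}·(AB) + t_B²·I − t_B·B + t_A·A − I, where I is the 2×2 identity matrix. -/

import Mathlib

/-- The trace of an element of `SL₂(k)`, viewed as a matrix. -/
def trSL {k : Type*} [CommRing k] (M : Matrix.SpecialLinearGroup (Fin 2) k) : k :=
  Matrix.trace (M : Matrix (Fin 2) (Fin 2) k)

/-- The matrix identity
`[A,B] = −t_{AB} t_B A + t_{AB} (AB) + t_B² I − t_B B + t_A A − I` for `A, B ∈ SL₂(k)`. -/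
theorem commutator_matrix_identity {k : Type*} [Field k]
    (A B : Matrix.SpecialLinearGroup (Fin 2) k) :
    ((A * B * A⁻¹ * B⁻¹ : Matrix.SpecialLinearGroup (Fin 2) k) : Matrix (Fin 2) (Fin 2) k) =
      -(trSL (A * B) * trSL B) • (A : Matrix (Fin 2) (Fin 2) k)
        + trSL (A * B) • ((A * B : Matrix.SpecialLinearGroup (Fin 2) k) :
            Matrix (Fin 2) (Fin 2) k)
        + trSL B ^ 2 • (1 : Matrix (Fin 2) (Fin 2) k)
        - trSL B • (B : Matrix (Fin 2) (Fin 2) k)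
        + trSL A • (A : Matrix (Fin 2) (Fin 2) k)
        - (1 : Matrix (Fin 2) (Fin 2) k) := by
  have hinv : ∀ M : Matrix.SpecialLinearGroup (Fin 2) k,
      ((M⁻¹ : Matrix.SpecialLinearGroup (Fin 2) k) : Matrix (Fin 2) (Fin 2) k)
        = trSL M • 1 - M := by
    intro M
    rw [Matrix.SpecialLinearGroup.coe_inv]
    ext i j
    fin_cases i <;> fin_cases j <;>
      simp [Matrix.adjugate_fin_two, trSL, Matrix.trace_fin_two]
  have hcoe : ∀ M : Matrix.SpecialLinearGroup (Fin 2) k,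
      (M : Matrix (Fin 2) (Fin 2) k) * (trSL M • 1 - M) = 1 := by
    intro M
    rw [← hinv, ← Matrix.SpecialLinearGroup.coe_mul, mul_inv_cancel,
      Matrix.SpecialLinearGroup.coe_one]
  have hsq : ∀ M : Matrix.SpecialLinearGroup (Fin 2) k,
      (M : Matrix (Fin 2) (Fin 2) k) * M = trSL M • (M : Matrix (Fin 2) (Fin 2) k) - 1 := by
    intro M
    have h := hcoe M
    rw [mul_sub, Matrix.mul_smul, mul_one] at h
    rw [eq_sub_iff_add_eq, ← h]
    abel
  set M : Matrix (Fin 2) (Fin 2) k := (A : Matrix (Fin 2) (Fin 2) k) with hM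
  set N : Matrix (Fin 2) (Fin 2) k := (B : Matrix (Fin 2) (Fin 2) k) with hN
  set a := trSL A
  set b := trSL B
  set c := trSL (A * B)
  have hMN : (M * N) * (M * N) = c • (M * N) - 1 := by
    have h := hsq (A * B)
    simpa [Matrix.SpecialLinearGroup.coe_mul] using h
  have hNN : N * N = b • N - 1 := hsq B
  have hNB : N * (b • (1 : Matrix (Fin 2) (Fin 2) k) - N) = 1 := hcoe B
  have e2 : M * (N * N) = b • (M * N) - M := by
    rw [hNN, mul_sub, Matrix.mul_smul, mul_one]
  have e3 : M * (N * (M * N)) = c • (M * N) - 1 := by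
    rw [← mul_assoc, hMN]
  have e1 : M * (N * M) = c • M - b • (1 : Matrix (Fin 2) (Fin 2) k) + N := by
    calc M * (N * M) = (M * (N * M)) * (N * (b • (1 : Matrix (Fin 2) (Fin 2) k) - N)) := by
          rw [hNB, mul_one]
      _ = ((M * N) * (M * N)) * (b • (1 : Matrix (Fin 2) (Fin 2) k) - N) := by
          simp only [mul_assoc]
      _ = (c • (M * N) - 1) * (b • (1 : Matrix (Fin 2) (Fin 2) k) - N) := by rw [hMN]
      _ = (c * b) • (M * N) - c • (M * (N * N)) - b • (1 : Matrix (Fin 2) (Fin 2) k) + N := by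
          simp only [sub_mul, mul_sub, Matrix.smul_mul, Matrix.mul_smul, one_mul, mul_one,
            smul_smul, smul_sub, mul_assoc]
          module
      _ = c • M - b • (1 : Matrix (Fin 2) (Fin 2) k) + N := by
          rw [e2]
          module
  calc ((A * B * A⁻¹ * B⁻¹ : Matrix.SpecialLinearGroup (Fin 2) k) : Matrix (Fin 2) (Fin 2) k)
      = M * N * (a • (1 : Matrix (Fin 2) (Fin 2) k) - M) * (b • (1 : Matrix (Fin 2) (Fin 2) k) - N) := by
        simp only [Matrix.SpecialLinearGroup.coe_mul, hinv, hM, hN]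
        rfl
    _ = (a * b) • (M * N) - b • (M * (N * M)) - a • (M * (N * N)) + M * (N * (M * N)) := by
        simp only [mul_sub, sub_mul, Matrix.mul_smul, Matrix.smul_mul, mul_one, one_mul,
          smul_smul, smul_sub, mul_assoc]
        module
    _ = (a * b) • (M * N) - b • (c • M - b • (1 : Matrix (Fin 2) (Fin 2) k) + N)
          - a • (b • (M * N) - M) + (c • (M * N) - 1) := by rw [e1, e2, e3]
    _ = -(c * b) • M + c • (M * N) + b ^ 2 • (1 : Matrix (Fin 2) (Fin 2) k)
          - b • N + a • M - 1 := by module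
    _ = _ := by simp only [Matrix.SpecialLinearGroup.coe_mul, hM, hN]
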